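/- For every admissible Verlinde triple (l,l'',l') of level k and every N ≥ 1, the concatenation map c_C(l,l'',l') maps C^{(N)}_{k,l'} into C^{(N+1)}_{k,l} and is injective; moreover, the images c_C(l,l'',l')(C^{(N)}_{k,l'}) for distinct admissible triples of level k with first entry l are pairwise disjoint, and their union over all admissible triples (l,l'',l') of level k with first entry l equals C^{(N+1)}_{k,l}. -/

import Mathlib

/-- `(α,β,γ)` is an admissible Verlinde triple of level `k`. -/
def IsAdm (k α β γ : ℕ) : Prop :=
  ∃ x y z : ℕ, x + y + z ≤ k ∧ α = x + y ∧ β = y + z ∧ γ = x + z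
/-- `x(α,β,γ) = (α+γ-β)/2` (exact on admissible triples). -/
def xA (α β γ : ℕ) : ℕ := (α + γ - β) / 2
/-- `y(α,β,γ) = (α+β-γ)/2` (exact on admissible triples). -/
def yA (α β γ : ℕ) : ℕ := (α + β - γ) / 2
/-- `z(α,β,γ) = (β+γ-α)/2` (exact on admissible triples). -/
def zA (α β γ : ℕ) : ℕ := (β + γ - α) / 2
/-- `a, b : ℕ → ℕ` represent a combinatorial path
`(a_{N-1},…,a_0; b_{N-1},…,b_1)` of length `N`, level `k` and weight `l`:
`b 0 = 0` is a dummy value, entries vanish from index `N` on, and the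
conventions `b_{-1} = l`, `b_∞ = k`, `a_{-1} = a_∞ = 0` are built into the
inequalities (the cases `i = -1` and `j = ∞` of the trapezoid condition are
listed separately). -/
def IsCombPath (k l N : ℕ) (a b : ℕ → ℕ) : Prop :=
  (∀ i, a i ≤ k) ∧ (∀ i, b i ≤ k) ∧
  b 0 = 0 ∧
  (∀ i, N ≤ i → a i = 0) ∧ (∀ i, N ≤ i → b i = 0) ∧
  a 0 ≤ l ∧
  (∀ i, a i + b (i + 1) + a (i + 1) ≤ k) ∧
  (∀ i, b i + a i + b (i + 1) ≤ k) ∧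
  (∀ i j : ℕ, i < j →
    ∑ s ∈ Finset.Icc i j, b s ≤ k + ∑ s ∈ Finset.Ico (i + 1) (j - 1), a s) ∧
  (∀ j : ℕ, l + ∑ s ∈ Finset.Icc 0 j, b s ≤ k + ∑ s ∈ Finset.Ico 0 (j - 1), a s) ∧
  (∀ i : ℕ, (∑ s ∈ Finset.Icc i N, b s) + k ≤ k + ∑ s ∈ Finset.Icc (i + 1) N, a s) ∧
  (l + (∑ s ∈ Finset.Icc 0 N, b s) + k ≤ k + ∑ s ∈ Finset.Icc 0 N, a s)
/-- The concatenation map `c_C(l,l'',l')` on combinatorial paths: it appends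
`a = y(l,l'',l')` as the new index-`0` entry of the `a`-sequence and
`b = z(l,l'',l') - (a 0 - x(l,l'',l'))⁺` as the new index-`1` entry of the
`b`-sequence, shifting all previous indices up by one. -/
def concatC (l l'' l' : ℕ) (a b : ℕ → ℕ) : (ℕ → ℕ) × (ℕ → ℕ) :=
  (fun i => if i = 0 then yA l l'' l' else a (i - 1),
   fun i => if i = 0 then 0
     else if i = 1 then zA l l'' l' - (a 0 - xA l l'' l') else b (i - 1))

/-- For every admissible Verlinde triple `(l,l'',l')` of level `k`, the
concatenation map `c_C(l,l'',l')` maps `C^{(N)}_{k,l'}` into `C^{(N+1)}_{k,l}`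
and is injective; the images for distinct admissible triples with first entry
`l` are pairwise disjoint, and their union is all of `C^{(N+1)}_{k,l}`. -/
lemma sum_Icc_shift (f : ℕ → ℕ) (i j : ℕ) :
    ∑ s ∈ Finset.Icc (i+1) (j+1), f s = ∑ s ∈ Finset.Icc i j, f (s+1) := by
  rw [← Finset.map_add_right_Icc i j 1, Finset.sum_map]; rfl

lemma sum_Ico_shift (f : ℕ → ℕ) (i j : ℕ) :
    ∑ s ∈ Finset.Ico (i+1) (j+1), f s = ∑ s ∈ Finset.Ico i j, f (s+1) := by
  rw [← Finset.map_add_right_Ico i j 1, Finset.sum_map]; rfl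

lemma sum_Icc_peel (f : ℕ → ℕ) (i j : ℕ) (h : i ≤ j) :
    ∑ s ∈ Finset.Icc i j, f s = f i + ∑ s ∈ Finset.Icc (i+1) j, f s := by
  rw [Finset.Icc_eq_cons_Ioc h, Finset.sum_cons, Finset.Icc_add_one_left_eq_Ioc]

lemma sum_Ico_peel (f : ℕ → ℕ) (i j : ℕ) (h : i < j) :
    ∑ s ∈ Finset.Ico i j, f s = f i + ∑ s ∈ Finset.Ico (i+1) j, f s := by
  rw [Finset.Ico_eq_cons_Ioo h, Finset.sum_cons, ← Finset.Ico_add_one_left_eq_Ioo]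

lemma sum_Icc_eq_shift (f g : ℕ → ℕ) (i j : ℕ) {i' j' : ℕ} (h1 : i' = i + 1)
    (h2 : j' = j + 1) (h : ∀ s, i ≤ s → s ≤ j → f (s+1) = g s) :
    ∑ s ∈ Finset.Icc i' j', f s = ∑ s ∈ Finset.Icc i j, g s := by
  subst h1 h2
  rw [sum_Icc_shift]
  exact Finset.sum_congr rfl fun s hs =>
    h s (Finset.mem_Icc.mp hs).1 (Finset.mem_Icc.mp hs).2

lemma sum_Ico_eq_shift (f g : ℕ → ℕ) (i j : ℕ) {i' j' : ℕ} (h1 : i' = i + 1)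
    (h2 : j' = j + 1) (h : ∀ s, i ≤ s → s < j → f (s+1) = g s) :
    ∑ s ∈ Finset.Ico i' j', f s = ∑ s ∈ Finset.Ico i j, g s := by
  subst h1 h2
  rw [sum_Ico_shift]
  exact Finset.sum_congr rfl fun s hs =>
    h s (Finset.mem_Ico.mp hs).1 (Finset.mem_Ico.mp hs).2

lemma sum_Icc_of_empty (f : ℕ → ℕ) (i j : ℕ) (h : j < i) :
    ∑ s ∈ Finset.Icc i j, f s = 0 := by
  rw [Finset.Icc_eq_empty (by omega), Finset.sum_empty]

lemma sum_Ico_of_empty (f : ℕ → ℕ) (i j : ℕ) (h : j ≤ i) :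
    ∑ s ∈ Finset.Ico i j, f s = 0 := by
  rw [Finset.Ico_eq_empty (by omega), Finset.sum_empty]

lemma sum_Icc_peel0 (f : ℕ → ℕ) (j : ℕ) :
    ∑ s ∈ Finset.Icc 0 j, f s = f 0 + ∑ s ∈ Finset.Icc 1 j, f s := by
  rw [sum_Icc_peel f 0 j (Nat.zero_le j)]

lemma sum_Ico_peel0 (f : ℕ → ℕ) (j : ℕ) (h : 0 < j) :
    ∑ s ∈ Finset.Ico 0 j, f s = f 0 + ∑ s ∈ Finset.Ico 1 j, f s := by
  rw [sum_Ico_peel f 0 j h]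

lemma sum_Icc_00 (f : ℕ → ℕ) : ∑ s ∈ Finset.Icc 0 0, f s = f 0 := by
  rw [Finset.Icc_self, Finset.sum_singleton]

lemma sum_Icc_01 (f : ℕ → ℕ) : ∑ s ∈ Finset.Icc 0 1, f s = f 0 + f 1 := by
  rw [sum_Icc_peel0, Finset.Icc_self, Finset.sum_singleton]

lemma sum_Icc_02 (f : ℕ → ℕ) : ∑ s ∈ Finset.Icc 0 2, f s = f 0 + (f 1 + f 2) := by
  rw [sum_Icc_peel0, sum_Icc_peel f 1 2 (by omega)]
  norm_num [Finset.Icc_self]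

lemma sum_Ico_01 (f : ℕ → ℕ) : ∑ s ∈ Finset.Ico 0 1, f s = f 0 := by
  rw [Nat.Ico_zero_eq_range, Finset.sum_range_one]


lemma concat_path (k N x y z : ℕ) (hN : 1 ≤ N) (hxyz : x + y + z ≤ k)
    (a b : ℕ → ℕ) (hp : IsCombPath k (x+z) N a b) :
    IsCombPath k (x+y) (N+1)
      (fun i => if i = 0 then y else a (i-1))
      (fun i => if i = 0 then 0 else if i = 1 then z - (a 0 - x) else b (i-1)) := by
  obtain ⟨ha, hb, hb0, haN, hbN, ha0, h7, h8, h9, h10, h11, h12⟩ := hp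
  set A : ℕ → ℕ := fun i => if i = 0 then y else a (i-1) with hAdef
  set B : ℕ → ℕ := fun i => if i = 0 then 0 else if i = 1 then z - (a 0 - x) else b (i-1)
    with hBdef
  have hA0 : A 0 = y := rfl
  have hAs : ∀ s, A (s+1) = a s := by
    intro s; simp only [hAdef]
    rw [if_neg (by omega)]; congr 1
  have hB0 : B 0 = 0 := rfl
  have hB1 : B 1 = z - (a 0 - x) := rfl
  have hBs : ∀ s, 1 ≤ s → B (s+1) = b s := by
    intro s hs; simp only [hBdef]
    rw [if_neg (by omega), if_neg (by omega)]; congr 1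
  -- b 1 bound from h10 at j = 1
  have hb1 : x + z + b 1 ≤ k := by
    have h := h10 1
    rw [sum_Icc_peel b 0 1 (by omega), sum_Icc_peel b 1 1 le_rfl,
      sum_Icc_of_empty b 2 1 (by omega), sum_Ico_of_empty a 0 (1-1) (by omega)] at h
    omega
  -- the key case i = 1 of the trapezoid inequality
  have key1 : ∀ n, ∑ s ∈ Finset.Icc 1 (n+2), B s ≤ k + ∑ s ∈ Finset.Ico 2 (n+1), A s := by
    intro n
    rcases n with _ | m
    · rw [sum_Icc_peel B 1 2 (by omega), sum_Icc_peel B 2 2 le_rfl,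
        sum_Icc_of_empty B 3 2 (by omega), sum_Ico_of_empty A 2 1 (by omega),
        hB1, hBs 1 le_rfl]
      omega
    · rw [sum_Icc_peel B 1 (m+3) (by omega),
        sum_Icc_eq_shift B b 1 (m+2) (by omega) (by omega) (fun s hs _ => hBs s (by omega)),
        sum_Ico_eq_shift A a 1 (m+1) (by omega) (by omega) (fun s _ _ => hAs s), hB1]
      have h := h10 (m+2)
      rw [sum_Icc_peel b 0 (m+2) (by omega), hb0,
        show m+2-1 = m+1 from rfl, sum_Ico_peel a 0 (m+1) (by omega)] at h
      simp only [Nat.zero_add] at h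
      omega
  refine ⟨?_, ?_, hB0, ?_, ?_, ?_, ?_, ?_, ?_, ?_, ?_, ?_⟩
  · -- A i ≤ k
    intro i
    rcases i with _ | m
    · exact hA0 ▸ by omega
    · rw [hAs]; exact ha m
  · -- B i ≤ k
    intro i
    rcases i with _ | m
    · omega
    · rcases m with _ | m
      · rw [hB1]; omega
      · rw [hBs (m+1) (by omega)]; exact hb (m+1)
  · -- A vanishes
    intro i hi
    obtain ⟨m, rfl⟩ : ∃ m, i = m + 1 := ⟨i - 1, by omega⟩
    rw [hAs]; exact haN m (by omega)
  · -- B vanishes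
    intro i hi
    obtain ⟨m, rfl⟩ : ∃ m, i = m + 1 := ⟨i - 1, by omega⟩
    rw [hBs m (by omega)]; exact hbN m (by omega)
  · -- A 0 ≤ x + y
    rw [hA0]; omega
  · -- condition 7
    intro i
    rcases i with _ | m
    · rw [hA0, hB1, hAs]; omega
    · rw [hAs, hAs, hBs (m+1) (by omega)]; exact h7 m
  · -- condition 8
    intro i
    rcases i with _ | m
    · rw [hB0, hA0, hB1]; omega
    · rcases m with _ | m
      · rw [hB1, hAs, hBs 1 le_rfl]; omega
      · rw [hBs (m+1) (by omega), hAs, hBs (m+2) (by omega)]; exact h8 (m+1)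
  · -- condition 9: trapezoid
    intro i j hij
    rcases Nat.lt_or_ge i 2 with hi | hi
    · rcases Nat.lt_or_ge j 2 with hj | hj
      · obtain rfl : i = 0 := by omega
        obtain rfl : j = 1 := by omega
        rw [sum_Icc_peel B 0 1 (by omega), sum_Icc_peel B 1 1 le_rfl,
          sum_Icc_of_empty B 2 1 (by omega), hB0, hB1]
        omega
      · obtain ⟨n, rfl⟩ : ∃ n, j = n + 2 := ⟨j - 2, by omega⟩
        have hsub : ∑ s ∈ Finset.Ico 2 (n+1), A s ≤ ∑ s ∈ Finset.Ico (i+1) (n+2-1), A s := by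
          apply Finset.sum_le_sum_of_subset
          apply Finset.Ico_subset_Ico (by omega) (by omega)
        rcases Nat.lt_or_ge i 1 with hi1 | hi1
        · obtain rfl : i = 0 := by omega
          rw [sum_Icc_peel B 0 (n+2) (by omega), hB0]
          simp only [Nat.zero_add] at hsub ⊢
          have := key1 n
          omega
        · obtain rfl : i = 1 := by omega
          have := key1 n
          omega
    · obtain ⟨m, rfl⟩ : ∃ m, i = m + 2 := ⟨i - 2, by omega⟩
      obtain ⟨n, rfl⟩ : ∃ n, j = n + 3 := ⟨j - 3, by omega⟩
      rw [sum_Icc_eq_shift B b (m+1) (n+2) (by omega) (by omega) (fun s hs _ => hBs s (by omega)),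
        sum_Ico_eq_shift A a (m+2) (n+1) (by omega) (by omega) (fun s _ _ => hAs s)]
      have h := h9 (m+1) (n+2) (by omega)
      rw [show m+1+1 = m+2 from rfl, show n+2-1 = n+1 from rfl] at h
      exact h
  · -- condition 10: boundary i = -1
    intro j
    rcases Nat.lt_or_ge j 2 with hj | hj
    · rcases Nat.lt_or_ge j 1 with hj1 | hj1
      · obtain rfl : j = 0 := by omega
        rw [sum_Icc_peel B 0 0 le_rfl, sum_Icc_of_empty B 1 0 (by omega), hB0]
        omega
      · obtain rfl : j = 1 := by omega
        rw [sum_Icc_peel B 0 1 (by omega), sum_Icc_peel B 1 1 le_rfl,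
          sum_Icc_of_empty B 2 1 (by omega), hB0, hB1]
        omega
    · obtain ⟨n, rfl⟩ : ∃ n, j = n + 2 := ⟨j - 2, by omega⟩
      rw [sum_Icc_peel B 0 (n+2) (by omega), sum_Icc_peel B 1 (n+2) (by omega), hB0, hB1,
        sum_Icc_eq_shift B b 1 (n+1) (by omega) (by omega) (fun s hs _ => hBs s (by omega)),
        show n+2-1 = n+1 from rfl, sum_Ico_peel A 0 (n+1) (by omega), hA0,
        sum_Ico_eq_shift A a 0 n (by omega) (by omega) (fun s _ _ => hAs s)]
      have h := h10 (n+1)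
      rw [sum_Icc_peel b 0 (n+1) (by omega), hb0, show n+1-1 = n from rfl] at h
      simp only [Nat.zero_add] at h
      omega
  · -- condition 11: j = ∞
    intro i
    rcases Nat.lt_or_ge i 2 with hi | hi
    · have h := h12
      rw [sum_Icc_peel b 0 N (by omega), hb0, sum_Icc_peel a 0 N (by omega)] at h
      simp only [Nat.zero_add] at h
      rcases Nat.lt_or_ge i 1 with hi1 | hi1
      · obtain rfl : i = 0 := by omega
        rw [sum_Icc_peel B 0 (N+1) (by omega), sum_Icc_peel B 1 (N+1) (by omega), hB0, hB1,
          sum_Icc_eq_shift B b 1 N (by omega) rfl (fun s hs _ => hBs s (by omega)),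
          sum_Icc_eq_shift A a 0 N (by omega) rfl (fun s _ _ => hAs s),
          sum_Icc_peel a 0 N (by omega)]
        simp only [Nat.zero_add]
        omega
      · obtain rfl : i = 1 := by omega
        rw [sum_Icc_peel B 1 (N+1) (by omega), hB1,
          sum_Icc_eq_shift B b 1 N (by omega) rfl (fun s hs _ => hBs s (by omega)),
          sum_Icc_eq_shift A a 1 N (by omega) rfl (fun s _ _ => hAs s)]
        omega
    · obtain ⟨m, rfl⟩ : ∃ m, i = m + 2 := ⟨i - 2, by omega⟩
      rw [sum_Icc_eq_shift B b (m+1) N (by omega) rfl (fun s hs _ => hBs s (by omega)),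
        sum_Icc_eq_shift A a (m+2) N (by omega) rfl (fun s _ _ => hAs s)]
      have h := h11 (m+1)
      rw [show m+1+1 = m+2 from rfl] at h
      exact h
  · -- condition 12: both boundaries
    rw [sum_Icc_peel B 0 (N+1) (by omega), sum_Icc_peel B 1 (N+1) (by omega), hB0, hB1,
      sum_Icc_eq_shift B b 1 N (by omega) rfl (fun s hs _ => hBs s (by omega)),
      sum_Icc_peel A 0 (N+1) (by omega), hA0,
      sum_Icc_eq_shift A a 0 N (by omega) rfl (fun s _ _ => hAs s),
      sum_Icc_peel a 0 N (by omega)]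
    simp only [Nat.zero_add]
    have h := h12
    rw [sum_Icc_peel b 0 N (by omega), hb0, sum_Icc_peel a 0 N (by omega)] at h
    simp only [Nat.zero_add] at h
    omega

lemma split_path (k N l : ℕ) (hN : 1 ≤ N) (A B : ℕ → ℕ)
    (hp : IsCombPath k l (N+1) A B) :
    ∃ x y z, x + y + z ≤ k ∧ l = x + y ∧ y = A 0 ∧
      z - (A 1 - x) = B 1 ∧ A 1 ≤ x + z ∧
      IsCombPath k (x+z) N (fun i => A (i+1))
        (fun i => if i = 0 then 0 else B (i+1)) := by
  obtain ⟨hA, hB, hB0, hAN, hBN, hA0l, H7, H8, H9, H10, H11, H12⟩ := hp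
  set x := l - A 0 with hxdef
  set z := B 1 + (A 1 - (l - A 0)) with hzdef
  set a : ℕ → ℕ := fun i => A (i+1) with hadef
  set b : ℕ → ℕ := fun i => if i = 0 then 0 else B (i+1) with hbdef
  have hbs : ∀ s, 1 ≤ s → b s = B (s+1) := by
    intro s hs; simp only [hbdef]; rw [if_neg (by omega)]
  have hfb : ∀ s, 1 ≤ s → B (s+1) = b s := fun s hs => (hbs s hs).symm
  have hfa : ∀ s, A (s+1) = a s := fun s => rfl
  have hb0 : b 0 = 0 := rfl
  have hxl : x + A 0 = l := by omega
  have hxyz : x + A 0 + z ≤ k := by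
    have h1 := H10 1
    rw [sum_Icc_01 B, hB0, sum_Ico_of_empty A 0 (1-1) (by omega)] at h1
    have h2 := H7 0
    simp only [Nat.zero_add] at h2
    omega
  refine ⟨x, A 0, z, hxyz, by omega, rfl, by omega, by omega,
    fun i => hA (i+1), ?_, hb0, ?_, ?_, ?_, ?_, ?_, ?_, ?_, ?_, ?_⟩
  · -- b i ≤ k
    intro i
    rcases i with _ | m
    · rw [hb0]; omega
    · rw [hbs (m+1) (by omega)]; exact hB (m+2)
  · -- a vanishes
    intro i hi
    exact hAN (i+1) (by omega)
  · -- b vanishes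
    intro i hi
    rw [hbs i (by omega)]; exact hBN (i+1) (by omega)
  · -- a 0 ≤ x + z
    show A 1 ≤ x + z
    omega
  · -- condition 7
    intro i
    exact H7 (i+1)
  · -- condition 8
    intro i
    rcases i with _ | m
    · show b 0 + A 1 + B 2 ≤ k
      have := H8 1
      simp only [Nat.reduceAdd] at this
      omega
    · exact H8 (m+2)
  · -- condition 9
    intro i j hij
    rcases i with _ | m
    · rcases Nat.lt_or_ge j 2 with hj | hj
      · obtain rfl : j = 1 := by omega
        rw [sum_Icc_01 b, hb0, sum_Ico_of_empty a (0+1) (1-1) (by omega)]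
        have h2 : b 1 = B 2 := rfl
        have := hB 2
        omega
      · obtain ⟨n, rfl⟩ : ∃ n, j = n + 2 := ⟨j - 2, by omega⟩
        rw [show n+2-1 = n+1 from rfl]
        simp only [Nat.zero_add]
        rw [sum_Icc_peel0 b (n+2), hb0,
          ← sum_Icc_eq_shift B b 1 (n+2) (i' := 2) (j' := n+3) (by omega) (by omega)
            (fun s hs _ => hfb s hs)]
        have F := H9 2 (n+3) (by omega)
        rw [show n+3-1 = n+2 from rfl, show (2:ℕ)+1 = 3 from rfl,
          sum_Ico_eq_shift A a 2 (n+1) (i' := 3) (j' := n+2) (by omega) (by omega)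
            (fun s _ _ => hfa s)] at F
        have M : ∑ s ∈ Finset.Ico 2 (n+1), a s ≤ ∑ s ∈ Finset.Ico 1 (n+1), a s :=
          Finset.sum_le_sum_of_subset (Finset.Ico_subset_Ico (by omega) le_rfl)
        omega
    · obtain ⟨n, rfl⟩ : ∃ n, j = n + 2 := ⟨j - 2, by omega⟩
      rw [show m+1+1 = m+2 from rfl, show n+2-1 = n+1 from rfl,
        ← sum_Icc_eq_shift B b (m+1) (n+2) (i' := m+2) (j' := n+3) (by omega) (by omega)
          (fun s hs _ => hfb s (by omega)),
        ← sum_Ico_eq_shift A a (m+2) (n+1) (i' := m+3) (j' := n+2) (by omega) (by omega)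
          (fun s _ _ => hfa s)]
      have F := H9 (m+2) (n+3) (by omega)
      rw [show m+2+1 = m+3 from rfl, show n+3-1 = n+2 from rfl] at F
      exact F
  · -- condition 10
    intro j
    rcases Nat.lt_or_ge j 2 with hj | hj
    · rcases Nat.lt_or_ge j 1 with hj1 | hj1
      · obtain rfl : j = 0 := by omega
        rw [sum_Icc_00 b, hb0, sum_Ico_of_empty a 0 (0-1) (by omega)]
        omega
      · obtain rfl : j = 1 := by omega
        rw [sum_Icc_01 b, hb0, sum_Ico_of_empty a 0 (1-1) (by omega)]
        have h2 : b 1 = B 2 := rfl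
        have F1 := H10 2
        rw [show (2:ℕ)-1 = 1 from rfl, sum_Icc_02 B, hB0, sum_Ico_01 A] at F1
        have F2 := H8 1
        simp only [Nat.reduceAdd] at F2
        omega
    · obtain ⟨n, rfl⟩ : ∃ n, j = n + 2 := ⟨j - 2, by omega⟩
      rw [show n+2-1 = n+1 from rfl, sum_Icc_peel0 b (n+2), hb0,
        ← sum_Icc_eq_shift B b 1 (n+2) (i' := 2) (j' := n+3) (by omega) (by omega)
          (fun s hs _ => hfb s hs),
        ← sum_Ico_eq_shift A a 0 (n+1) (i' := 1) (j' := n+2) (by omega) (by omega)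
          (fun s _ _ => hfa s),
        sum_Ico_peel A 1 (n+2) (by omega)]
      simp only [Nat.reduceAdd]
      have F1 := H10 (n+3)
      rw [show n+3-1 = n+2 from rfl, sum_Icc_peel0 B (n+3),
        sum_Icc_peel B 1 (n+3) (by omega), hB0,
        sum_Ico_peel0 A (n+2) (by omega), sum_Ico_peel A 1 (n+2) (by omega)] at F1
      simp only [Nat.reduceAdd] at F1
      have F2 := H9 1 (n+3) (by omega)
      rw [show n+3-1 = n+2 from rfl, sum_Icc_peel B 1 (n+3) (by omega)] at F2
      simp only [Nat.reduceAdd] at F2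
      omega
  · -- condition 11
    intro i
    rcases i with _ | m
    · simp only [Nat.zero_add]
      rw [sum_Icc_peel0 b N, hb0,
        ← sum_Icc_eq_shift B b 1 N (i' := 2) (j' := N+1) (by omega) rfl
          (fun s hs _ => hfb s hs),
        ← sum_Icc_eq_shift A a 1 N (i' := 2) (j' := N+1) (by omega) rfl
          (fun s _ _ => hfa s)]
      have F := H11 2
      simp only [Nat.reduceAdd] at F
      have M : ∑ s ∈ Finset.Icc 3 (N+1), A s ≤ ∑ s ∈ Finset.Icc 2 (N+1), A s :=
        Finset.sum_le_sum_of_subset (Finset.Icc_subset_Icc (by omega) le_rfl)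
      omega
    · rw [show m+1+1 = m+2 from rfl,
        ← sum_Icc_eq_shift B b (m+1) N (i' := m+2) (j' := N+1) (by omega) rfl
          (fun s hs _ => hfb s (by omega)),
        ← sum_Icc_eq_shift A a (m+2) N (i' := m+3) (j' := N+1) (by omega) rfl
          (fun s _ _ => hfa s)]
      have F := H11 (m+2)
      rw [show m+2+1 = m+3 from rfl] at F
      exact F
  · -- condition 12
    rw [sum_Icc_peel0 b N, hb0,
      ← sum_Icc_eq_shift B b 1 N (i' := 2) (j' := N+1) (by omega) rfl
        (fun s hs _ => hfb s hs),
      ← sum_Icc_eq_shift A a 0 N (i' := 1) (j' := N+1) (by omega) rfl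
        (fun s _ _ => hfa s),
      sum_Icc_peel A 1 (N+1) (by omega)]
    simp only [Nat.reduceAdd]
    have F1 := H12
    rw [sum_Icc_peel0 B (N+1), sum_Icc_peel B 1 (N+1) (by omega), hB0,
      sum_Icc_peel0 A (N+1), sum_Icc_peel A 1 (N+1) (by omega)] at F1
    simp only [Nat.reduceAdd] at F1
    have F2 := H11 1
    rw [sum_Icc_peel B 1 (N+1) (by omega)] at F2
    simp only [Nat.reduceAdd] at F2
    omega

theorem stmt_1 (k N l : ℕ) (hk : 1 ≤ k) (hN : 1 ≤ N) (hl : l ≤ k) :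
    (∀ l'' l', IsAdm k l l'' l' → ∀ a b, IsCombPath k l' N a b →
      IsCombPath k l (N + 1) (concatC l l'' l' a b).1 (concatC l l'' l' a b).2) ∧
    (∀ l'' l', IsAdm k l l'' l' → ∀ a b a' b', IsCombPath k l' N a b →
      IsCombPath k l' N a' b' → concatC l l'' l' a b = concatC l l'' l' a' b' →
      a = a' ∧ b = b') ∧
    (∀ l₁'' l₁' l₂'' l₂', IsAdm k l l₁'' l₁' → IsAdm k l l₂'' l₂' →
      (l₁'', l₁') ≠ (l₂'', l₂') → ∀ a b a' b', IsCombPath k l₁' N a b →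
      IsCombPath k l₂' N a' b' → concatC l l₁'' l₁' a b ≠ concatC l l₂'' l₂' a' b') ∧
    (∀ A B, IsCombPath k l (N + 1) A B →
      ∃ l'' l' a b, IsAdm k l l'' l' ∧ IsCombPath k l' N a b ∧
        concatC l l'' l' a b = (A, B)) := by
  refine ⟨?_, ?_, ?_, ?_⟩
  · -- part 1: maps into
    rintro l'' l' ⟨x, y, z, hxyz, h1, h2, h3⟩ a b hp
    have hx : xA l l'' l' = x := by simp only [xA]; omega
    have hy : yA l l'' l' = y := by simp only [yA]; omega
    have hz : zA l l'' l' = z := by simp only [zA]; omega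
    have e : concatC l l'' l' a b =
        (fun i => if i = 0 then y else a (i-1),
         fun i => if i = 0 then 0 else if i = 1 then z - (a 0 - x) else b (i-1)) := by
      simp only [concatC, hx, hy, hz]
    rw [h3] at hp
    rw [e, h1]
    exact concat_path k N x y z hN hxyz a b hp
  · -- part 2: injectivity
    intro l'' l' _ a b a' b' hp hp' heq
    constructor
    · funext i
      exact congrArg (fun p => p.1 (i+1)) heq
    · funext i
      rcases i with _ | m
      · rw [hp.2.2.1, hp'.2.2.1]
      · exact congrArg (fun p => p.2 (m+2)) heq
  · -- part 3: disjointness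
    rintro l₁'' l₁' l₂'' l₂' ⟨x₁, y₁, z₁, hs1, e11, e12, e13⟩
      ⟨x₂, y₂, z₂, hs2, e21, e22, e23⟩ hne a b a' b' hp hp' heq
    have qx1 : xA l l₁'' l₁' = x₁ := by simp only [xA]; omega
    have qy1 : yA l l₁'' l₁' = y₁ := by simp only [yA]; omega
    have qz1 : zA l l₁'' l₁' = z₁ := by simp only [zA]; omega
    have qx2 : xA l l₂'' l₂' = x₂ := by simp only [xA]; omega
    have qy2 : yA l l₂'' l₂' = y₂ := by simp only [yA]; omega
    have qz2 : zA l l₂'' l₂' = z₂ := by simp only [zA]; omega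
    have hy0 : yA l l₁'' l₁' = yA l l₂'' l₂' := congrArg (fun p => p.1 0) heq
    have ha0 : a 0 = a' 0 := congrArg (fun p => p.1 1) heq
    have hB1 : zA l l₁'' l₁' - (a 0 - xA l l₁'' l₁') =
        zA l l₂'' l₂' - (a' 0 - xA l l₂'' l₂') := congrArg (fun p => p.2 1) heq
    have ha0' : a 0 ≤ l₁' := hp.2.2.2.2.2.1
    have ha0'' : a' 0 ≤ l₂' := hp'.2.2.2.2.2.1
    apply hne
    rw [show l₁'' = l₂'' by omega, show l₁' = l₂' by omega]
  · -- part 4: surjectivity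
    intro A B hp
    obtain ⟨x, y, z, hxyz, hlxy, hyA0, hzB1, hA1, hpath⟩ := split_path k N l hN A B hp
    refine ⟨y + z, x + z, (fun i => A (i+1)), (fun i => if i = 0 then 0 else B (i+1)),
      ⟨x, y, z, hxyz, hlxy, rfl, rfl⟩, hpath, ?_⟩
    have qx : xA l (y+z) (x+z) = x := by simp only [xA]; omega
    have qy : yA l (y+z) (x+z) = y := by simp only [yA]; omega
    have qz : zA l (y+z) (x+z) = z := by simp only [zA]; omega
    simp only [concatC, qx, qy, qz]
    refine Prod.ext ?_ ?_
    · funext i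
      rcases i with _ | m
      · exact hyA0
      · rfl
    · funext i
      rcases i with _ | m
      · exact hp.2.2.1.symm
      rcases m with _ | m
      · exact hzB1
      · rfl
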